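/- arXiv:2402.10465 — 2 statements merged into one kernel-verified Lean document; each statement's English description precedes it below -/
import Mathlib

section
/- Let R = F_2[x]/⟨x³−x⟩ and let u denote the image of x in R, so that every element of R is uniquely of the form a + bu + cu² with a, b, c ∈ F_2. The F_2-linear map τ : R → F_2 defined by τ(a + bu + cu²) = c is surjective and its kernel contains no nonzero ideal of R (i.e., τ is an F_2-valued trace of R). -/
open Polynomial

/-- The `F₂`-algebra `R₂ = F₂[x]/⟨x³ − x⟩`. -/
abbrev R2 : Type :=
  Polynomial (ZMod 2) ⧸ Ideal.span {(X ^ 3 - X : Polynomial (ZMod 2))}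

/-- `u`, the image of `x` in `R₂`. -/
noncomputable def uu : R2 := Ideal.Quotient.mk _ X

lemma hmonic : (X^3 - X : Polynomial (ZMod 2)).Monic :=
  Polynomial.monic_X_pow_sub (by rw [Polynomial.degree_X]; norm_num)

lemma hdeg : (X^3 - X : Polynomial (ZMod 2)).natDegree = 3 := by compute_degree!

lemma uroot : uu = AdjoinRoot.root (X^3 - X : Polynomial (ZMod 2)) := rfl

noncomputable def pb : PowerBasis (ZMod 2) R2 :=
  AdjoinRoot.powerBasis (f := (X^3 - X : Polynomial (ZMod 2))) hmonic.ne_zero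

lemma pbdim : pb.dim = 3 := hdeg

noncomputable def bb : Module.Basis (Fin 3) (ZMod 2) R2 := pb.basis.reindex (finCongr pbdim)

lemma bb_apply (i : Fin 3) : bb i = uu ^ (i : ℕ) := by
  rw [bb, Module.Basis.reindex_apply, pb.basis_eq_pow]
  simp [pb, uroot, AdjoinRoot.powerBasis_gen]
  rfl

lemma key (a b c : ZMod 2) :
    algebraMap (ZMod 2) R2 a + b • uu + c • uu ^ 2 = a • bb 0 + b • bb 1 + c • bb 2 := by
  rw [bb_apply, bb_apply, bb_apply]
  simp [Algebra.algebraMap_eq_smul_one]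

lemma repr_key (a b c : ZMod 2) (i : Fin 3) :
    bb.repr (algebraMap (ZMod 2) R2 a + b • uu + c • uu ^ 2) i = ![a, b, c] i := by
  rw [key]
  fin_cases i <;> simp [Finsupp.single_apply]

lemma ucube : uu ^ 3 = uu := by
  have : uu ^ 3 - uu = 0 := by
    rw [uroot]
    have := AdjoinRoot.eval₂_root (X^3 - X : Polynomial (ZMod 2))
    simp at this
    exact this
  linear_combination this
/-- every element of `R₂` is uniquely of the form `a + b·u + c·u²` with
`a, b, c ∈ F₂`, and the `F₂`-linear map `τ : R₂ → F₂` sending `a + b·u + c·u²` to `c` is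
surjective with kernel containing no nonzero ideal of `R₂` (i.e. `τ` is an `F₂`-valued
trace of `R₂`). -/
theorem stmt0 :
    (∀ r : R2, ∃! abc : ZMod 2 × ZMod 2 × ZMod 2,
        r = algebraMap (ZMod 2) R2 abc.1 + abc.2.1 • uu + abc.2.2 • uu ^ 2) ∧
    ∃ τ : R2 →ₗ[ZMod 2] ZMod 2,
      (∀ a b c : ZMod 2, τ (algebraMap (ZMod 2) R2 a + b • uu + c • uu ^ 2) = c) ∧
      Function.Surjective τ ∧
      (∀ I : Ideal R2, (I : Set R2) ⊆ (LinearMap.ker τ : Set R2) → I = ⊥) := by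
  have hex : ∀ r : R2, r = algebraMap (ZMod 2) R2 (bb.repr r 0) + (bb.repr r 1) • uu
      + (bb.repr r 2) • uu ^ 2 := by
    intro r
    rw [key]
    conv_lhs => rw [← bb.sum_repr r]
    rw [Fin.sum_univ_three]
  constructor
  · intro r
    refine ⟨(bb.repr r 0, bb.repr r 1, bb.repr r 2), hex r, ?_⟩
    rintro ⟨a, b, c⟩ h
    have h0 := repr_key a b c 0
    have h1 := repr_key a b c 1
    have h2 := repr_key a b c 2
    rw [← h] at h0 h1 h2
    simp only [Matrix.cons_val_zero, Matrix.cons_val_one, Matrix.head_cons,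
      Matrix.cons_val_two, Matrix.tail_cons] at h0 h1 h2
    simp [← h0, ← h1, ← h2]
  · refine ⟨bb.coord 2, ?_, ?_, ?_⟩
    · intro a b c
      rw [Module.Basis.coord_apply, repr_key]
      simp
    · intro c
      refine ⟨c • uu ^ 2, ?_⟩
      have := repr_key 0 0 c 2
      simpa using this
    · intro I hI
      rw [eq_bot_iff]
      intro r hr
      have hτ : ∀ a b c : ZMod 2,
          bb.coord 2 (algebraMap (ZMod 2) R2 a + b • uu + c • uu ^ 2) = c := by
        intro a b c
        rw [Module.Basis.coord_apply, repr_key]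
        simp
      have hr_eq := hex r
      set a := bb.repr r 0 with ha
      set b := bb.repr r 1 with hb
      set c := bb.repr r 2 with hc
      have hmem : ∀ s : R2, s ∈ I → bb.coord 2 s = 0 := fun s hs => hI hs
      -- c = 0
      have hc0 : c = 0 := by
        have := hmem r hr
        rwa [hr_eq, hτ] at this
      rw [hc0, zero_smul, add_zero] at hr_eq
      -- b = 0
      have hur : uu * r = algebraMap (ZMod 2) R2 0 + a • uu + b • uu ^ 2 := by
        rw [hr_eq, map_zero, zero_add, mul_add, mul_smul_comm, mul_comm uu,
          ← Algebra.smul_def, sq]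
      have hb0 : b = 0 := by
        have := hmem (uu * r) (I.mul_mem_left uu hr)
        rwa [hur, hτ] at this
      rw [hb0, zero_smul, add_zero] at hr_eq
      -- a = 0
      have hu2r : uu ^ 2 * r = algebraMap (ZMod 2) R2 0 + (0 : ZMod 2) • uu + a • uu ^ 2 := by
        rw [hr_eq, map_zero, zero_add, zero_smul, zero_add, mul_comm, ← Algebra.smul_def]
      have ha0 : a = 0 := by
        have := hmem (uu ^ 2 * r) (I.mul_mem_left (uu ^ 2) hr)
        rwa [hu2r, hτ] at this
      rw [ha0, map_zero] at hr_eq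
      simp [hr_eq]
end

section
/- Let L, M, N ⊆ [m] with L a proper subset of [m] and with L, M, N not all empty, and let C = C(Δ_L^c, Δ_M, Δ_N). Then C is a binary linear code of length (2^m − 2^{|L|})·2^{|M|+|N|}, dimension m + |M| + |N|, and minimum distance (2^m − 2^{|L|})·2^{|M|+|N|−1}; its weight enumerator equals 1 + (2^{m+|M|+|N|} − 2^{m−|L|})·X^{(2^m − 2^{|L|})·2^{|M|+|N|−1}} + (2^{m−|L|} − 1)·X^{2^{m+|M|+|N|−1}}; and C is a Griesmer code, i.e., Σ_{i=0}^{k−1} ⌈d/2^i⌉ = n for these n, k, d. -/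
open Finset Polynomial
open scoped Classical

/-- `V m` is the vector space `F₂^m`. -/
abbrev V (m : ℕ) := Fin m → ZMod 2

/-- Dot product `x·y = Σ_i x_i y_i` in `F₂`. -/
def dot {m : ℕ} (x y : V m) : ZMod 2 := ∑ i, x i * y i

/-- `Supp v = {i : v i ≠ 0}`. -/
def supp {m : ℕ} (v : V m) : Finset (Fin m) := Finset.univ.filter fun i => v i ≠ 0

/-- The simplicial complex `Δ_L = {v : Supp v ⊆ L}` generated by `L`. -/
def Δ {m : ℕ} (L : Finset (Fin m)) : Finset (V m) := Finset.univ.filter fun v => supp v ⊆ L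

/-- Hamming weight of a vector. -/
def wtv {ι : Type} [Fintype ι] (c : ι → ZMod 2) : ℕ :=
  (Finset.univ.filter fun i => c i ≠ 0).card

/-- The linear functional `x ↦ x·y`. -/
noncomputable def dotL {m : ℕ} (y : V m) : V m →ₗ[ZMod 2] ZMod 2 :=
  ∑ i, LinearMap.smulRight (LinearMap.proj i) (y i)

/-- The linear map `(α,β,γ) ↦ ((d₁,d₂,d₃) ↦ α·d₁ + (β+γ)·d₂ + β·d₃)` whose range is the
binary code `C(D₁,D₂,D₃)`. -/
noncomputable def codeMap {m : ℕ} (D₁ D₂ D₃ : Finset (V m)) :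
    (V m × V m × V m) →ₗ[ZMod 2]
      (({x // x ∈ D₁} × {x // x ∈ D₂} × {x // x ∈ D₃}) → ZMod 2) :=
  LinearMap.pi fun d =>
    (dotL d.1.1).comp (LinearMap.fst (ZMod 2) (V m) (V m × V m))
    + (dotL d.2.1.1).comp
        (((LinearMap.fst (ZMod 2) (V m) (V m)).comp (LinearMap.snd (ZMod 2) (V m) (V m × V m)))
          + ((LinearMap.snd (ZMod 2) (V m) (V m)).comp (LinearMap.snd (ZMod 2) (V m) (V m × V m))))
    + (dotL d.2.2.1).comp
        ((LinearMap.fst (ZMod 2) (V m) (V m)).comp (LinearMap.snd (ZMod 2) (V m) (V m × V m)))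

lemma codeMap_apply {m : ℕ} (D₁ D₂ D₃ : Finset (V m)) (α β γ : V m)
    (d : {x // x ∈ D₁} × {x // x ∈ D₂} × {x // x ∈ D₃}) :
    codeMap D₁ D₂ D₃ (α, β, γ) d = dot α d.1.1 + dot (β + γ) d.2.1.1 + dot β d.2.2.1 := by
  simp [codeMap, dotL, dot, LinearMap.smulRight, mul_comm]

def chi (a : ZMod 2) : ℤ := if a = 0 then 1 else -1

lemma chi_add (a b : ZMod 2) : chi (a + b) = chi a * chi b := by
  revert a b; decide

lemma one_add_chi (a : ZMod 2) : 1 + chi a = if a = 0 then 2 else 0 := by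
  revert a; decide

lemma chi_sum {ι : Type*} (s : Finset ι) (f : ι → ZMod 2) :
    chi (∑ i ∈ s, f i) = ∏ i ∈ s, chi (f i) := by
  classical
  induction s using Finset.cons_induction with
  | empty => simp [chi]
  | cons a s ha ih => rw [Finset.sum_cons, Finset.prod_cons, chi_add, ih]

lemma mem_Δ {m : ℕ} {S : Finset (Fin m)} {v : V m} : v ∈ Δ S ↔ ∀ i ∉ S, v i = 0 := by
  have : v ∈ Δ S ↔ supp v ⊆ S := by simp [Δ]
  rw [this]
  constructor
  · intro h i hi
    by_contra hv
    exact hi (h (by simp [supp, hv]))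
  · intro h i hi
    simp only [supp, Finset.mem_filter] at hi
    by_contra hS
    exact hi.2 (h i hS)

lemma Δ_eq_piFinset {m : ℕ} (S : Finset (Fin m)) :
    Δ S = Fintype.piFinset (fun i => if i ∈ S then (Finset.univ : Finset (ZMod 2)) else {0}) := by
  ext v
  rw [mem_Δ, Fintype.mem_piFinset]
  constructor
  · intro h i
    by_cases hi : i ∈ S <;> simp [hi, h]
  · intro h i hi
    have := h i
    simpa [hi] using this

lemma card_Δ {m : ℕ} (S : Finset (Fin m)) : (Δ S).card = 2 ^ S.card := by
  rw [Δ_eq_piFinset, Fintype.card_piFinset]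
  rw [← Finset.prod_filter_mul_prod_filter_not Finset.univ (· ∈ S)]
  simp only [Finset.filter_univ_mem]
  have h1 : ∀ i ∈ S, (if i ∈ S then (Finset.univ : Finset (ZMod 2)) else {0}).card = 2 := by
    intro i hi; simp [hi]
  have h2 : ∀ i ∈ Finset.univ.filter (· ∉ S),
      (if i ∈ S then (Finset.univ : Finset (ZMod 2)) else {0}).card = 1 := by
    intro i hi; simp at hi; simp [hi]
  rw [Finset.prod_congr rfl h1, Finset.prod_congr rfl h2]
  simp

lemma univ_zmod2 : (Finset.univ : Finset (ZMod 2)) = {0, 1} := by decide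

lemma sum_chi_Δ {m : ℕ} (S : Finset (Fin m)) (v : V m) :
    ∑ d ∈ Δ S, chi (dot v d) = if ∀ i ∈ S, v i = 0 then (2 : ℤ) ^ S.card else 0 := by
  have h0 : ∑ d ∈ Δ S, chi (dot v d) = ∑ d ∈ Δ S, ∏ i, chi (v i * d i) := by
    refine Finset.sum_congr rfl fun d _ => ?_
    rw [dot, chi_sum]
  rw [h0, Δ_eq_piFinset,
    ← Finset.prod_univ_sum (fun i => if i ∈ S then (Finset.univ : Finset (ZMod 2)) else {0})
      (fun i x => chi (v i * x))]
  have h1 : ∀ i : Fin m, (∑ x ∈ (if i ∈ S then (Finset.univ : Finset (ZMod 2)) else {0}),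
      chi (v i * x)) = if i ∈ S then (if v i = 0 then 2 else 0) else 1 := by
    intro i
    by_cases hi : i ∈ S
    · simp only [hi, if_true, univ_zmod2]
      rw [Finset.sum_pair (by decide)]
      simpa [chi] using one_add_chi (v i)
    · simp [hi, chi]
  rw [Finset.prod_congr rfl (fun i _ => h1 i)]
  by_cases h : ∀ i ∈ S, v i = 0
  · rw [if_pos h, ← Finset.prod_filter_mul_prod_filter_not Finset.univ (· ∈ S)]
    simp only [Finset.filter_univ_mem]
    rw [Finset.prod_congr rfl (fun i hi => by simp [hi, h i hi] : ∀ i ∈ S, _ = (2:ℤ)),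
        Finset.prod_congr rfl (fun i hi => by simp at hi; simp [hi] : ∀ i ∈ Finset.univ.filter (· ∉ S), _ = (1:ℤ))]
    simp
  · rw [if_neg h]
    push_neg at h
    obtain ⟨i, hi, hv⟩ := h
    exact Finset.prod_eq_zero (Finset.mem_univ i) (by simp [hi, hv])

/-- the elementary basis vector -/
def ev {m : ℕ} (i : Fin m) : V m := fun j => if j = i then 1 else 0

lemma dot_ev {m : ℕ} (v : V m) (i : Fin m) : dot v (ev i) = v i := by
  rw [dot]
  rw [Finset.sum_eq_single i]
  · simp [ev]
  · intro j _ hj; simp [ev, hj]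
  · intro h; exact absurd (Finset.mem_univ i) h

lemma dot_add_right {m : ℕ} (v x y : V m) : dot v (x + y) = dot v x + dot v y := by
  simp [dot, mul_add, Finset.sum_add_distrib]

lemma ev_mem_Δ {m : ℕ} {S : Finset (Fin m)} {i : Fin m} : ev i ∈ Δ S ↔ i ∈ S := by
  rw [mem_Δ]
  constructor
  · intro h
    by_contra hi
    have := h i hi
    simp [ev] at this
  · intro hi j hj
    have : j ≠ i := fun h => hj (h ▸ hi)
    simp [ev, this]

lemma span_lemma {m : ℕ} {L : Finset (Fin m)} (hP : L ⊂ Finset.univ) (α : V m)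
    (h : ∀ d ∈ (Δ L)ᶜ, dot α d = 0) : α = 0 := by
  obtain ⟨j, _, hj⟩ := Finset.exists_of_ssubset hP
  have hev : ∀ i, ev i + ev j ∈ (Δ L)ᶜ ∨ (i = j) := by
    intro i
    by_cases hij : i = j
    · right; exact hij
    · left
      rw [Finset.mem_compl, mem_Δ]
      push_neg
      exact ⟨j, hj, by simp [ev, Ne.symm hij, Pi.add_apply]⟩
  have hj0 : α j = 0 := by
    have : ev j ∈ (Δ L)ᶜ := by
      rw [Finset.mem_compl, mem_Δ]; push_neg; exact ⟨j, hj, by simp [ev]⟩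
    have := h _ this
    rwa [dot_ev] at this
  funext i
  by_cases hij : i = j
  · simpa [hij] using hj0
  · rcases hev i with hmem | h'
    · have := h _ hmem
      rw [dot_add_right, dot_ev, dot_ev, hj0, add_zero] at this
      simpa using this
    · exact absurd h' hij

lemma dot_eq_on_Δ {m : ℕ} {S : Finset (Fin m)} {d : V m} (hd : d ∈ Δ S) (v w : V m)
    (h : ∀ i ∈ S, v i = w i) : dot v d = dot w d := by
  rw [dot, dot]
  refine Finset.sum_congr rfl fun i _ => ?_
  by_cases hi : i ∈ S
  · rw [h i hi]
  · rw [mem_Δ.mp hd i hi, mul_zero, mul_zero]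

lemma wt_chi {ι : Type} [Fintype ι] (f : ι → ZMod 2) :
    2 * (wtv f : ℤ) = Fintype.card ι - ∑ i, chi (f i) := by
  classical
  have hsplit := Finset.sum_filter_add_sum_filter_not Finset.univ (fun i => f i ≠ 0)
    (fun i => chi (f i))
  have h1 : ∑ i ∈ Finset.univ.filter (fun i => f i ≠ 0), chi (f i)
      = -((Finset.univ.filter fun i => f i ≠ 0).card : ℤ) := by
    have hc : ∀ i ∈ Finset.univ.filter (fun i => f i ≠ 0), chi (f i) = (-1 : ℤ) := by
      intro i hi
      simp only [Finset.mem_filter] at hi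
      simp [chi, hi.2]
    rw [Finset.sum_congr rfl hc, Finset.sum_const]
    simp
  have h2 : ∑ i ∈ Finset.univ.filter (fun i => ¬ f i ≠ 0), chi (f i)
      = ((Finset.univ.filter fun i => ¬ f i ≠ 0).card : ℤ) := by
    have hc : ∀ i ∈ Finset.univ.filter (fun i => ¬ f i ≠ 0), chi (f i) = (1 : ℤ) := by
      intro i hi
      simp only [Finset.mem_filter, not_not] at hi
      simp [chi, hi.2]
    rw [Finset.sum_congr rfl hc, Finset.sum_const]
    simp
  have hcard : (Finset.univ.filter fun i => f i ≠ 0).card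
      + (Finset.univ.filter fun i => ¬ f i ≠ 0).card = Fintype.card ι := by
    rw [Finset.card_filter_add_card_filter_not]
    rfl
  rw [← hsplit, h1, h2, wtv]
  have := congrArg (fun x : ℕ => (x : ℤ)) hcard
  push_cast at this ⊢
  linarith

lemma sum_chi_code {m : ℕ} (D₁ D₂ D₃ : Finset (V m)) (α β γ : V m) :
    ∑ d : ({x // x ∈ D₁} × {x // x ∈ D₂} × {x // x ∈ D₃}), chi (codeMap D₁ D₂ D₃ (α, β, γ) d)
    = (∑ d ∈ D₁, chi (dot α d)) *
        ((∑ d ∈ D₂, chi (dot (β + γ) d)) * (∑ d ∈ D₃, chi (dot β d))) := by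
  have h : ∀ d : ({x // x ∈ D₁} × {x // x ∈ D₂} × {x // x ∈ D₃}),
      chi (codeMap D₁ D₂ D₃ (α, β, γ) d)
      = chi (dot α d.1.1) * (chi (dot (β + γ) d.2.1.1) * chi (dot β d.2.2.1)) := by
    intro d
    rw [codeMap_apply, chi_add, chi_add, mul_assoc]
  rw [Fintype.sum_congr _ _ h, Fintype.sum_prod_type]
  have h2 : ∀ a : {x // x ∈ D₁},
      (∑ p : {x // x ∈ D₂} × {x // x ∈ D₃},
        chi (dot α a.1) * (chi (dot (β + γ) p.1.1) * chi (dot β p.2.1)))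
      = chi (dot α a.1) * ((∑ d ∈ D₂, chi (dot (β + γ) d)) * (∑ d ∈ D₃, chi (dot β d))) := by
    intro a
    rw [← Finset.mul_sum]
    congr 1
    rw [Fintype.sum_prod_type]
    have h3 : ∀ b : {x // x ∈ D₂},
        (∑ c : {x // x ∈ D₃}, chi (dot (β + γ) b.1) * chi (dot β c.1))
        = chi (dot (β + γ) b.1) * (∑ d ∈ D₃, chi (dot β d)) := by
      intro b
      rw [← Finset.mul_sum]
      congr 1
      exact Finset.sum_coe_sort D₃ (fun d => chi (dot β d))
    rw [Fintype.sum_congr _ _ h3, ← Finset.sum_mul]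
    congr 1
    exact Finset.sum_coe_sort D₂ (fun d => chi (dot (β + γ) d))
  rw [Fintype.sum_congr _ _ h2, ← Finset.sum_mul]
  congr 1
  exact Finset.sum_coe_sort D₁ (fun d => chi (dot α d))

lemma Δ_univ {m : ℕ} : Δ (Finset.univ : Finset (Fin m)) = Finset.univ := by
  simp [Δ]

lemma sum_chi_compl {m : ℕ} (L : Finset (Fin m)) (α : V m) :
    ∑ d ∈ (Δ L)ᶜ, chi (dot α d)
      = (if α = 0 then (2 : ℤ) ^ m else 0) - (if ∀ i ∈ L, α i = 0 then (2 : ℤ) ^ L.card else 0) := by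
  have h := Finset.sum_add_sum_compl (Δ L) (fun d => chi (dot α d))
  have huniv : ∑ d : V m, chi (dot α d) = if α = 0 then (2 : ℤ) ^ m else 0 := by
    rw [← Δ_univ, sum_chi_Δ]
    have : (∀ i ∈ (Finset.univ : Finset (Fin m)), α i = 0) ↔ α = 0 := by
      constructor
      · intro hz; funext i; exact hz i (Finset.mem_univ i)
      · intro hz i _; rw [hz]; rfl
    rw [if_congr this rfl rfl, Finset.card_fin]
  rw [huniv] at h
  rw [← h, sum_chi_Δ]
  ring

lemma dot_zero_left {m : ℕ} (d : V m) : dot 0 d = 0 := by simp [dot]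

lemma dot_add_left {m : ℕ} (v w d : V m) : dot (v + w) d = dot v d + dot w d := by
  simp [dot, add_mul, Finset.sum_add_distrib]

lemma dot_zero_right {m : ℕ} (v : V m) : dot v 0 = 0 := by simp [dot]

lemma zero_mem_Δ {m : ℕ} (S : Finset (Fin m)) : (0 : V m) ∈ Δ S := by
  rw [mem_Δ]; intro i _; rfl

lemma add_self_V {m : ℕ} (v : V m) : v + v = 0 := by
  funext i
  exact CharTwo.add_self_eq_zero (v i)

lemma eq_of_add_eq_zero_V {m : ℕ} {v w : V m} (h : v + w = 0) : v = w := by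
  have := congrArg (· + w) h
  simpa [add_assoc, add_self_V] using this

lemma card_V (m : ℕ) : Fintype.card (V m) = 2 ^ m := by
  simp [Fintype.card_fun]

lemma card_coords {m : ℕ} (L M N : Finset (Fin m)) :
    Fintype.card ({x // x ∈ (Δ L)ᶜ} × {x // x ∈ (Δ M)} × {x // x ∈ (Δ N)})
      = (2 ^ m - 2 ^ L.card) * 2 ^ (M.card + N.card) := by
  simp only [Fintype.card_prod, Fintype.card_coe, Finset.card_compl, card_Δ, card_V, pow_add]
  try ring

lemma pow_card_le {m : ℕ} (L : Finset (Fin m)) : (2 : ℕ) ^ L.card ≤ 2 ^ m := by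
  apply Nat.pow_le_pow_right (by norm_num)
  simpa using Finset.card_le_card (Finset.subset_univ L)

/-- The main weight computation. -/
lemma two_mul_wt {m : ℕ} (L M N : Finset (Fin m)) (α β γ : V m) :
    2 * (wtv (codeMap (Δ L)ᶜ (Δ M) (Δ N) (α, β, γ)) : ℤ)
      = ((2 : ℤ) ^ m - 2 ^ L.card) * 2 ^ (M.card + N.card)
        - ((if α = 0 then (2 : ℤ) ^ m else 0) - (if ∀ i ∈ L, α i = 0 then (2:ℤ) ^ L.card else 0))
          * ((if ∀ i ∈ M, (β + γ) i = 0 then (2:ℤ) ^ M.card else 0)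
             * (if ∀ i ∈ N, β i = 0 then (2:ℤ) ^ N.card else 0)) := by
  rw [wt_chi, sum_chi_code, sum_chi_compl, sum_chi_Δ, sum_chi_Δ, card_coords]
  have : ((2 ^ m - 2 ^ L.card) * 2 ^ (M.card + N.card) : ℕ)
      = (((2 : ℤ) ^ m - 2 ^ L.card) * 2 ^ (M.card + N.card) : ℤ) := by
    push_cast [Nat.cast_sub (pow_card_le L)]
    ring
  rw [this]

lemma nonempty_compl {m : ℕ} {L : Finset (Fin m)} (hP : L ⊂ Finset.univ) :
    ∃ d, d ∈ (Δ L)ᶜ := by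
  obtain ⟨j, _, hj⟩ := Finset.exists_of_ssubset hP
  exact ⟨ev j, by rw [Finset.mem_compl, mem_Δ]; push_neg; exact ⟨j, hj, by simp [ev]⟩⟩

lemma code_eq_zero_iff {m : ℕ} {L M N : Finset (Fin m)} (hP : L ⊂ Finset.univ) (α β γ : V m) :
    codeMap (Δ L)ᶜ (Δ M) (Δ N) (α, β, γ) = 0
      ↔ α = 0 ∧ (∀ i ∈ M, (β + γ) i = 0) ∧ (∀ i ∈ N, β i = 0) := by
  constructor
  · intro h
    obtain ⟨d₀, hd₀⟩ := nonempty_compl hP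
    have happ : ∀ (d₁ : {x // x ∈ (Δ L)ᶜ}) (d₂ : {x // x ∈ Δ M}) (d₃ : {x // x ∈ Δ N}),
        dot α d₁.1 + dot (β + γ) d₂.1 + dot β d₃.1 = 0 := by
      intro d₁ d₂ d₃
      rw [← codeMap_apply (Δ L)ᶜ (Δ M) (Δ N) α β γ (d₁, d₂, d₃), h]
      rfl
    have hα : α = 0 := by
      apply span_lemma hP
      intro d hd
      have := happ ⟨d, hd⟩ ⟨0, zero_mem_Δ M⟩ ⟨0, zero_mem_Δ N⟩
      simpa [dot_zero_right] using this
    refine ⟨hα, ?_, ?_⟩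
    · intro i hi
      have := happ ⟨d₀, hd₀⟩ ⟨ev i, ev_mem_Δ.mpr hi⟩ ⟨0, zero_mem_Δ N⟩
      rw [hα, dot_zero_left, dot_zero_right, dot_ev] at this
      simpa using this
    · intro i hi
      have := happ ⟨d₀, hd₀⟩ ⟨0, zero_mem_Δ M⟩ ⟨ev i, ev_mem_Δ.mpr hi⟩
      rw [hα, dot_zero_left, dot_zero_right, dot_ev] at this
      simpa using this
  · rintro ⟨hα, hM, hN⟩
    funext d
    rw [codeMap_apply, hα, dot_zero_left,
      dot_eq_on_Δ d.2.1.2 (β + γ) 0 (fun i hi => hM i hi),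
      dot_eq_on_Δ d.2.2.2 β 0 (fun i hi => hN i hi), dot_zero_left, dot_zero_left]
    rfl

lemma wtv_eq_zero_iff {ι : Type} [Fintype ι] (f : ι → ZMod 2) : wtv f = 0 ↔ f = 0 := by
  rw [wtv, Finset.card_eq_zero, Finset.filter_eq_empty_iff]
  constructor
  · intro h; funext i; have := h (Finset.mem_univ i); simpa using this
  · intro h i _; rw [h]; simp

/-- Weight trichotomy for nonzero codewords. -/
lemma wt_cases {m : ℕ} (L M N : Finset (Fin m)) (hP : L ⊂ Finset.univ) (α β γ : V m)
    (hc : codeMap (Δ L)ᶜ (Δ M) (Δ N) (α, β, γ) ≠ 0) :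
    2 * (wtv (codeMap (Δ L)ᶜ (Δ M) (Δ N) (α, β, γ)) : ℤ)
        = ((2 : ℤ) ^ m - 2 ^ L.card) * 2 ^ (M.card + N.card)
    ∨ (α ≠ 0 ∧ (∀ i ∈ L, α i = 0) ∧ (∀ i ∈ M, (β + γ) i = 0) ∧ (∀ i ∈ N, β i = 0) ∧
        2 * (wtv (codeMap (Δ L)ᶜ (Δ M) (Δ N) (α, β, γ)) : ℤ)
          = (2 : ℤ) ^ m * 2 ^ (M.card + N.card)) := by
  have key := two_mul_wt L M N α β γ
  by_cases hL : ∀ i ∈ L, α i = 0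
  · by_cases hM : ∀ i ∈ M, (β + γ) i = 0
    · by_cases hN : ∀ i ∈ N, β i = 0
      · have hα : α ≠ 0 := by
          intro h
          exact hc ((code_eq_zero_iff hP α β γ).mpr ⟨h, hM, hN⟩)
        right
        refine ⟨hα, hL, hM, hN, ?_⟩
        rw [key, if_neg hα, if_pos hL, if_pos hM, if_pos hN, pow_add]
        ring
      · left; rw [key, if_neg hN]; ring
    · left; rw [key, if_neg hM]; ring
  · have hα : α ≠ 0 := by intro h; apply hL; intro i _; rw [h]; rfl
    left; rw [key, if_neg hα, if_neg hL]; ring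

/-- The code as a finset, realized as an image. -/
lemma code_finset_eq {m : ℕ} (L M N : Finset (Fin m)) (hP : L ⊂ Finset.univ) :
    Finset.univ.filter (fun c => c ∈ LinearMap.range (codeMap (Δ L)ᶜ (Δ M) (Δ N)))
      = Finset.image (fun p : V m × V m × V m =>
          codeMap (Δ L)ᶜ (Δ M) (Δ N) (p.1, p.2.1, p.2.1 + p.2.2))
          (Finset.univ ×ˢ (Δ N ×ˢ Δ M)) := by
  ext c
  simp only [Finset.mem_filter, Finset.mem_univ, true_and, Finset.mem_image, Finset.mem_product,
    LinearMap.mem_range]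
  constructor
  · rintro ⟨⟨α, β, γ⟩, rfl⟩
    have hβ' : (fun i => if i ∈ N then β i else 0) ∈ Δ N :=
      mem_Δ.mpr (fun i hi => by simp [hi])
    have hδ' : (fun i => if i ∈ M then (β + γ) i else 0) ∈ Δ M :=
      mem_Δ.mpr (fun i hi => by simp [hi])
    refine ⟨⟨α, fun i => if i ∈ N then β i else 0, fun i => if i ∈ M then (β + γ) i else 0⟩,
      ⟨hβ', hδ'⟩, ?_⟩
    funext d
    rw [codeMap_apply, codeMap_apply]
    congr 1
    · congr 1
      apply dot_eq_on_Δ d.2.1.2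
      intro i hi
      simp only [Pi.add_apply, hi, if_true]
      rw [← add_assoc, CharTwo.add_self_eq_zero, zero_add]
    · apply dot_eq_on_Δ d.2.2.2
      intro i hi
      simp [hi]
  · rintro ⟨p, _, rfl⟩
    exact ⟨(p.1, p.2.1, p.2.1 + p.2.2), rfl⟩

lemma code_param_injOn {m : ℕ} (L M N : Finset (Fin m)) (hP : L ⊂ Finset.univ) :
    Set.InjOn (fun p : V m × V m × V m =>
        codeMap (Δ L)ᶜ (Δ M) (Δ N) (p.1, p.2.1, p.2.1 + p.2.2))
      (Finset.univ ×ˢ (Δ N ×ˢ Δ M) : Finset (V m × V m × V m)) := by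
  rintro ⟨α, β, δ⟩ hp ⟨α', β', δ'⟩ hq h
  simp only [Finset.coe_product, Set.mem_prod, Finset.mem_coe, Finset.mem_product] at hp hq
  obtain ⟨d₀, hd₀⟩ := nonempty_compl hP
  have hββδ : β + (β + δ) = δ := by
    rw [← add_assoc, add_self_V, zero_add]
  have hββδ' : β' + (β' + δ') = δ' := by
    rw [← add_assoc, add_self_V, zero_add]
  have happ : ∀ (d₁ : {x // x ∈ (Δ L)ᶜ}) (d₂ : {x // x ∈ Δ M}) (d₃ : {x // x ∈ Δ N}),
      dot α d₁.1 + dot δ d₂.1 + dot β d₃.1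
        = dot α' d₁.1 + dot δ' d₂.1 + dot β' d₃.1 := by
    intro d₁ d₂ d₃
    have h2 := congrFun h (d₁, d₂, d₃)
    simp only [codeMap_apply, hββδ, hββδ'] at h2
    exact h2
  have hα : α = α' := by
    apply eq_of_add_eq_zero_V
    apply span_lemma hP
    intro d hd
    have h3 := happ ⟨d, hd⟩ ⟨0, zero_mem_Δ M⟩ ⟨0, zero_mem_Δ N⟩
    simp only [dot_zero_right, add_zero] at h3
    rw [dot_add_left, h3, CharTwo.add_self_eq_zero]
  have hβeq : β = β' := by
    funext i
    by_cases hi : i ∈ N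
    · have h3 := happ ⟨d₀, hd₀⟩ ⟨0, zero_mem_Δ M⟩ ⟨ev i, ev_mem_Δ.mpr hi⟩
      simp only [dot_zero_right, add_zero, dot_ev, hα] at h3
      exact add_left_cancel h3
    · rw [mem_Δ.mp hp.2.1 i hi, mem_Δ.mp hq.2.1 i hi]
  have hδeq : δ = δ' := by
    funext i
    by_cases hi : i ∈ M
    · have h3 := happ ⟨d₀, hd₀⟩ ⟨ev i, ev_mem_Δ.mpr hi⟩ ⟨0, zero_mem_Δ N⟩
      simp only [dot_zero_right, add_zero, dot_ev, hα, hβeq] at h3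
      exact add_left_cancel h3
    · rw [mem_Δ.mp hp.2.2 i hi, mem_Δ.mp hq.2.2 i hi]
  simp [hα, hβeq, hδeq]

lemma code_card {m : ℕ} (L M N : Finset (Fin m)) (hP : L ⊂ Finset.univ) :
    (Finset.univ.filter (fun c => c ∈ LinearMap.range (codeMap (Δ L)ᶜ (Δ M) (Δ N)))).card
      = 2 ^ (m + M.card + N.card) := by
  rw [code_finset_eq L M N hP, Finset.card_image_of_injOn (code_param_injOn L M N hP)]
  rw [Finset.card_product, Finset.card_product, card_Δ, card_Δ, Finset.card_univ, card_V]
  ring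

lemma code_inj_alpha {m : ℕ} {L M N : Finset (Fin m)} (hP : L ⊂ Finset.univ) {α α' : V m}
    (h : codeMap (Δ L)ᶜ (Δ M) (Δ N) (α, 0, 0) = codeMap (Δ L)ᶜ (Δ M) (Δ N) (α', 0, 0)) :
    α = α' := by
  apply eq_of_add_eq_zero_V
  apply span_lemma hP
  intro d hd
  have h2 := congrFun h (⟨d, hd⟩, ⟨0, zero_mem_Δ M⟩, ⟨0, zero_mem_Δ N⟩)
  simp only [codeMap_apply, dot_zero_right, add_zero] at h2
  rw [dot_add_left, h2, CharTwo.add_self_eq_zero]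

lemma wt_w2 {m : ℕ} (hm : 1 ≤ m) {L M N : Finset (Fin m)} (hP : L ⊂ Finset.univ) {α : V m}
    (hα : α ≠ 0) (hL : ∀ i ∈ L, α i = 0) :
    wtv (codeMap (Δ L)ᶜ (Δ M) (Δ N) (α, 0, 0)) = 2 ^ (m + M.card + N.card - 1) := by
  have key := two_mul_wt L M N α (0 : V m) (0 : V m)
  rw [if_neg hα, if_pos hL, if_pos (fun i _ => by simp : ∀ i ∈ M, ((0 : V m) + 0) i = 0),
    if_pos (fun i _ => by simp : ∀ i ∈ N, (0 : V m) i = 0)] at key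
  have h2 : 2 * (wtv (codeMap (Δ L)ᶜ (Δ M) (Δ N) (α, 0, 0)) : ℤ)
      = 2 * (2 : ℤ) ^ (m + M.card + N.card - 1) := by
    rw [key, ← pow_succ']
    have : m + M.card + N.card - 1 + 1 = m + (M.card + N.card) := by omega
    rw [this, pow_add]
    ring
  have := mul_left_cancel₀ (by norm_num : (2:ℤ) ≠ 0) h2
  exact_mod_cast this

lemma w2_filter_card {m : ℕ} (hm : 1 ≤ m) (L M N : Finset (Fin m)) (hP : L ⊂ Finset.univ) :
    ((Finset.univ.filter (fun c => c ∈ LinearMap.range (codeMap (Δ L)ᶜ (Δ M) (Δ N)))).filter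
        (fun c => wtv c = 2 ^ (m + M.card + N.card - 1))).card
      = 2 ^ (m - L.card) - 1 := by
  have himg : (Finset.univ.filter (fun c => c ∈ LinearMap.range (codeMap (Δ L)ᶜ (Δ M) (Δ N)))).filter
        (fun c => wtv c = 2 ^ (m + M.card + N.card - 1))
      = Finset.image (fun α => codeMap (Δ L)ᶜ (Δ M) (Δ N) (α, 0, 0)) ((Δ Lᶜ).erase 0) := by
    ext c
    simp only [Finset.mem_filter, Finset.mem_univ, true_and, Finset.mem_image,
      Finset.mem_erase, LinearMap.mem_range]
    constructor
    · rintro ⟨⟨⟨α, β, γ⟩, rfl⟩, hw⟩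
      have hc0 : codeMap (Δ L)ᶜ (Δ M) (Δ N) (α, β, γ) ≠ 0 := by
        intro h0
        rw [h0, (wtv_eq_zero_iff _).mpr rfl] at hw
        have : (0:ℕ) < 2 ^ (m + M.card + N.card - 1) := Nat.pow_pos (by norm_num)
        omega
      rcases wt_cases L M N hP α β γ hc0 with hcase | ⟨hα, hL, hM, hN, hval⟩
      · exfalso
        rw [hw] at hcase
        push_cast at hcase
        have h2 : (2:ℤ) * 2 ^ (m + M.card + N.card - 1) = 2 ^ m * 2 ^ (M.card + N.card) := by
          rw [← pow_succ']
          have : m + M.card + N.card - 1 + 1 = m + (M.card + N.card) := by omega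
          rw [this, pow_add]
        rw [h2] at hcase
        have : (2:ℤ) ^ L.card * 2 ^ (M.card + N.card) = 0 := by linarith
        have hpos : (0:ℤ) < 2 ^ L.card * 2 ^ (M.card + N.card) := by positivity
        omega
      · refine ⟨α, ⟨hα, mem_Δ.mpr (fun i hi => hL i (by simpa using hi))⟩, ?_⟩
        funext d
        rw [codeMap_apply, codeMap_apply,
          dot_eq_on_Δ d.2.1.2 (β + γ) ((0:V m) + 0) (fun i hi => by simpa using hM i hi),
          dot_eq_on_Δ d.2.2.2 β 0 (fun i hi => hN i hi)]
    · rintro ⟨α, ⟨hα0, hαL⟩, rfl⟩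
      have hL : ∀ i ∈ L, α i = 0 := fun i hi => mem_Δ.mp hαL i (by simpa using hi)
      refine ⟨⟨(α, 0, 0), rfl⟩, wt_w2 hm hP hα0 hL⟩
  rw [himg, Finset.card_image_of_injOn (fun x hx y hy h => code_inj_alpha hP h),
    Finset.card_erase_of_mem (zero_mem_Δ _), card_Δ, Finset.card_compl, Fintype.card_fin]

lemma ceil_aux {s : ℕ} (i : ℕ) (hs : 1 ≤ s) (hi : 1 ≤ i) :
    ⌈((2:ℚ) ^ s - 1) / 2 ^ i⌉ = 2 ^ (s - i) := by
  rcases le_or_gt i s with h | h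
  · rw [Int.ceil_eq_iff]
    constructor
    · push_cast
      rw [lt_div_iff₀ (by positivity)]
      have hpp : (2:ℚ) ^ (s - i) * 2 ^ i = 2 ^ s := by
        rw [← pow_add]
        congr 1
        omega
      have hq : ((2:ℚ) ^ (s - i) - 1) * 2 ^ i = 2 ^ s - 2 ^ i := by
        rw [sub_mul, one_mul, hpp]
      rw [hq]
      have : (1:ℚ) < 2 ^ i := by
        calc (1:ℚ) < 2 := by norm_num
        _ = 2 ^ 1 := (pow_one 2).symm
        _ ≤ 2 ^ i := by apply pow_le_pow_right₀ (by norm_num) hi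
      linarith
    · push_cast
      rw [div_le_iff₀ (by positivity), ← pow_add]
      have hq : s - i + i = s := by omega
      rw [hq]
      linarith [pow_pos (by norm_num : (0:ℚ) < 2) s]
  · have hsi : s - i = 0 := by omega
    rw [hsi, pow_zero, Int.ceil_eq_iff]
    constructor
    · push_cast
      rw [lt_div_iff₀ (by positivity)]
      have h1 : (2:ℚ) ≤ 2 ^ s := by
        calc (2:ℚ) = 2 ^ 1 := (pow_one 2).symm
        _ ≤ 2 ^ s := by apply pow_le_pow_right₀ (by norm_num) hs
      linarith
    · push_cast
      rw [div_le_iff₀ (by positivity), one_mul]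
      have h1 : (2:ℚ) ^ s ≤ 2 ^ i := by apply pow_le_pow_right₀ (by norm_num) (le_of_lt h)
      linarith

lemma geom2 (s : ℕ) : ∑ i ∈ Finset.range s, (2:ℤ) ^ i = 2 ^ s - 1 := by
  induction s with
  | zero => simp
  | succ s ih => rw [Finset.sum_range_succ, ih]; ring

lemma griesmer_aux (s t : ℕ) (hs : 1 ≤ s) :
    ∑ i ∈ Finset.range (s + t + 1), ⌈((2:ℚ) ^ t * (2 ^ s - 1)) / 2 ^ i⌉
      = 2 ^ (t + 1) * (2 ^ s - 1) := by
  induction t with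
  | zero =>
    simp only [Nat.add_zero, pow_zero, one_mul]
    rw [Finset.sum_range_succ']
    have h0 : ⌈((2:ℚ) ^ s - 1) / 2 ^ (0:ℕ)⌉ = 2 ^ s - 1 := by
      rw [pow_zero, div_one,
        show ((2:ℚ) ^ s - 1) = (((2:ℤ) ^ s - 1 : ℤ) : ℚ) by push_cast; ring]
      exact Int.ceil_intCast _
    have h1 : ∀ i ∈ Finset.range s, ⌈((2:ℚ) ^ s - 1) / 2 ^ (i + 1)⌉ = 2 ^ (s - 1 - i) := by
      intro i _
      rw [ceil_aux (i + 1) hs (by omega)]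
      congr 1
      omega
    rw [Finset.sum_congr rfl h1, h0, Finset.sum_range_reflect (fun j => (2:ℤ) ^ j) s, geom2]
    ring
  | succ t ih =>
    rw [show s + (t + 1) + 1 = (s + t + 1) + 1 by ring, Finset.sum_range_succ']
    have h0 : ⌈((2:ℚ) ^ (t+1) * (2 ^ s - 1)) / 2 ^ (0:ℕ)⌉ = 2 ^ (t+1) * (2 ^ s - 1) := by
      rw [pow_zero, div_one,
        show ((2:ℚ) ^ (t+1) * (2 ^ s - 1)) = (((2:ℤ) ^ (t+1) * (2 ^ s - 1) : ℤ) : ℚ) by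
          push_cast; ring]
      exact Int.ceil_intCast _
    have h1 : ∀ i ∈ Finset.range (s + t + 1), ⌈((2:ℚ) ^ (t+1) * (2 ^ s - 1)) / 2 ^ (i + 1)⌉
        = ⌈((2:ℚ) ^ t * (2 ^ s - 1)) / 2 ^ i⌉ := by
      intro i _
      congr 1
      rw [pow_succ, pow_succ ((2:ℚ)) i]
      field_simp
    rw [Finset.sum_congr rfl h1, ih, h0]
    ring

lemma code_finrank {m : ℕ} (L M N : Finset (Fin m)) (hP : L ⊂ Finset.univ) :
    Module.finrank (ZMod 2) ↥(LinearMap.range (codeMap (Δ L)ᶜ (Δ M) (Δ N)))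
      = m + M.card + N.card := by
  letI hfin : Fintype ↥(LinearMap.range (codeMap (Δ L)ᶜ (Δ M) (Δ N))) := Fintype.ofFinite _
  have hcard : Fintype.card ↥(LinearMap.range (codeMap (Δ L)ᶜ (Δ M) (Δ N)))
      = 2 ^ (m + M.card + N.card) := by
    rw [← code_card L M N hP, ← Fintype.card_coe]
    exact Fintype.card_congr (Equiv.subtypeEquivRight (fun c => by simp))
  have h2 := Module.card_eq_pow_finrank (K := ZMod 2)
    (V := ↥(LinearMap.range (codeMap (Δ L)ᶜ (Δ M) (Δ N))))
  rw [ZMod.card, hcard] at h2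
  exact (Nat.pow_right_injective (le_refl 2) h2).symm

set_option maxHeartbeats 2000000 in
/-- Theorem 4.1(2): the code `C((Δ L)ᶜ, (Δ M), (Δ N))` is a two-weight
binary `[(2^m − 2^{|L|})·2^{|M|}+|N|}, m+|M|+|N|]` Griesmer code with the stated
weight distribution. -/
theorem stmt6 (m : ℕ) (hm : 1 ≤ m) (L M N : Finset (Fin m))
    (hP : L ⊂ Finset.univ) (hne : L ≠ ∅ ∨ M ≠ ∅ ∨ N ≠ ∅) :
    (Fintype.card ({x // x ∈ (Δ L)ᶜ} × {x // x ∈ (Δ M)} × {x // x ∈ (Δ N)}) = (2 ^ m - 2 ^ L.card) * 2 ^ (M.card + N.card)) ∧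
    (Module.finrank (ZMod 2) ↥(LinearMap.range (codeMap (Δ L)ᶜ (Δ M) (Δ N))) = m + M.card + N.card) ∧
    IsLeast {w : ℕ | ∃ c ∈ LinearMap.range (codeMap (Δ L)ᶜ (Δ M) (Δ N)), c ≠ 0 ∧ wtv c = w}
      (((2 ^ m - 2 ^ L.card) * 2 ^ (M.card + N.card)) / 2) ∧
    ((∑ c ∈ Finset.univ.filter (fun c => c ∈ LinearMap.range (codeMap (Δ L)ᶜ (Δ M) (Δ N))),
        (X : ℤ[X]) ^ wtv c)
      = 1 + Polynomial.C ((2 : ℤ) ^ (m + M.card + N.card) - 2 ^ (m - L.card)) * X ^ (((2 ^ m - 2 ^ L.card) * 2 ^ (M.card + N.card)) / 2)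
          + Polynomial.C ((2 : ℤ) ^ (m - L.card) - 1) * X ^ (2 ^ (m + M.card + N.card - 1))) ∧
    (∑ i ∈ Finset.range (m + M.card + N.card), ⌈((((2 ^ m - 2 ^ L.card) * 2 ^ (M.card + N.card)) / 2 : ℚ)) / 2 ^ i⌉ = ((2 ^ m - 2 ^ L.card) * 2 ^ (M.card + N.card) : ℤ)) := by
  classical
  have haM : L.card < m := by
    have := Finset.card_lt_card hP
    simpa using this
  have hab : 1 ≤ L.card + (M.card + N.card) := by
    rcases hne with h | h | h
    · have := Finset.card_pos.mpr (Finset.nonempty_of_ne_empty h); omega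
    · have := Finset.card_pos.mpr (Finset.nonempty_of_ne_empty h); omega
    · have := Finset.card_pos.mpr (Finset.nonempty_of_ne_empty h); omega
  have hpow_le : (2:ℕ) ^ L.card ≤ 2 ^ m := pow_card_le L
  have hpow_lt : (2:ℕ) ^ L.card < 2 ^ m := Nat.pow_lt_pow_right (by norm_num) haM
  have heven : 2 ∣ (2 ^ m - 2 ^ L.card) * 2 ^ (M.card + N.card) := by
    rcases Nat.eq_zero_or_pos (M.card + N.card) with hb | hb
    · have ha : 1 ≤ L.card := by omega
      exact Dvd.dvd.mul_right
        (Nat.dvd_sub (dvd_pow_self 2 (by omega : m ≠ 0))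
          (dvd_pow_self 2 (by omega : L.card ≠ 0))) _
    · exact Dvd.dvd.mul_left (dvd_pow_self 2 (by omega : M.card + N.card ≠ 0)) _
  have hw1 : 2 * (((2 ^ m - 2 ^ L.card) * 2 ^ (M.card + N.card)) / 2)
      = (2 ^ m - 2 ^ L.card) * 2 ^ (M.card + N.card) := Nat.mul_div_cancel' heven
  have hw1z : 2 * ((((2 ^ m - 2 ^ L.card) * 2 ^ (M.card + N.card)) / 2 : ℕ) : ℤ)
      = ((2:ℤ) ^ m - 2 ^ L.card) * 2 ^ (M.card + N.card) := by
    calc 2 * ((((2 ^ m - 2 ^ L.card) * 2 ^ (M.card + N.card)) / 2 : ℕ) : ℤ)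
        = ((2 * (((2 ^ m - 2 ^ L.card) * 2 ^ (M.card + N.card)) / 2) : ℕ) : ℤ) := by
          push_cast; ring
      _ = (((2 ^ m - 2 ^ L.card) * 2 ^ (M.card + N.card) : ℕ) : ℤ) := by rw [hw1]
      _ = ((2:ℤ) ^ m - 2 ^ L.card) * 2 ^ (M.card + N.card) := by
          rw [Nat.cast_mul, Nat.cast_sub hpow_le]
          push_cast
          ring
  have hw2z : 2 * (((2:ℕ) ^ (m + M.card + N.card - 1) : ℕ) : ℤ)
      = (2:ℤ) ^ m * 2 ^ (M.card + N.card) := by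
    push_cast
    rw [← pow_succ']
    rw [show m + M.card + N.card - 1 + 1 = m + (M.card + N.card) by omega, pow_add]
  have hexpand : ((2:ℤ) ^ m - 2 ^ L.card) * 2 ^ (M.card + N.card)
      = 2 ^ m * 2 ^ (M.card + N.card) - 2 ^ L.card * 2 ^ (M.card + N.card) := by ring
  have hposL : (0:ℤ) < 2 ^ L.card * 2 ^ (M.card + N.card) := by positivity
  have hposn : (0:ℤ) < ((2:ℤ) ^ m - 2 ^ L.card) * 2 ^ (M.card + N.card) := by
    apply mul_pos _ (by positivity)
    have : (2:ℤ) ^ L.card < 2 ^ m := by exact_mod_cast hpow_lt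
    linarith
  refine ⟨card_coords L M N, code_finrank L M N hP, ⟨?_, ?_⟩, ?_, ?_⟩
  · -- membership in weight set
    rcases hne with h | h | h
    · obtain ⟨i, hi⟩ := Finset.nonempty_of_ne_empty h
      refine ⟨codeMap (Δ L)ᶜ (Δ M) (Δ N) (ev i, 0, 0), LinearMap.mem_range_self _ _, ?_, ?_⟩
      · rw [Ne, code_eq_zero_iff hP]
        rintro ⟨h1, -, -⟩
        have := congrFun h1 i
        simp [ev] at this
      · have key := two_mul_wt L M N (ev i) 0 0
        have hLfail : ¬ ∀ j ∈ L, ev i j = 0 := by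
          push_neg
          exact ⟨i, hi, by simp [ev]⟩
        have hαfail : ev i ≠ (0 : V m) := by
          intro h1
          have := congrFun h1 i
          simp [ev] at this
        rw [if_neg hαfail, if_neg hLfail] at key
        simp only [sub_zero, zero_sub, neg_zero, zero_mul, mul_zero, sub_self] at key
        have : (wtv (codeMap (Δ L)ᶜ (Δ M) (Δ N) (ev i, 0, 0)) : ℤ)
            = ((((2 ^ m - 2 ^ L.card) * 2 ^ (M.card + N.card)) / 2 : ℕ) : ℤ) := by
          linarith
        exact_mod_cast this
    · obtain ⟨i, hi⟩ := Finset.nonempty_of_ne_empty h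
      refine ⟨codeMap (Δ L)ᶜ (Δ M) (Δ N) (0, 0, ev i), LinearMap.mem_range_self _ _, ?_, ?_⟩
      · rw [Ne, code_eq_zero_iff hP]
        rintro ⟨-, h2, -⟩
        have := h2 i hi
        simp [ev] at this
      · have key := two_mul_wt L M N (0 : V m) (0 : V m) (ev i)
        have hMfail : ¬ ∀ j ∈ M, ((0 : V m) + ev i) j = 0 := by
          push_neg
          exact ⟨i, hi, by simp [ev]⟩
        rw [if_neg hMfail] at key
        simp only [zero_mul, mul_zero, sub_zero] at key
        have : (wtv (codeMap (Δ L)ᶜ (Δ M) (Δ N) (0, 0, ev i)) : ℤ)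
            = ((((2 ^ m - 2 ^ L.card) * 2 ^ (M.card + N.card)) / 2 : ℕ) : ℤ) := by
          linarith
        exact_mod_cast this
    · obtain ⟨i, hi⟩ := Finset.nonempty_of_ne_empty h
      refine ⟨codeMap (Δ L)ᶜ (Δ M) (Δ N) (0, ev i, ev i), LinearMap.mem_range_self _ _, ?_, ?_⟩
      · rw [Ne, code_eq_zero_iff hP]
        rintro ⟨-, -, h3⟩
        have := h3 i hi
        simp [ev] at this
      · have key := two_mul_wt L M N (0 : V m) (ev i) (ev i)
        have hNfail : ¬ ∀ j ∈ N, ev i j = 0 := by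
          push_neg
          exact ⟨i, hi, by simp [ev]⟩
        rw [if_neg hNfail] at key
        simp only [zero_mul, mul_zero, sub_zero] at key
        have : (wtv (codeMap (Δ L)ᶜ (Δ M) (Δ N) (0, ev i, ev i)) : ℤ)
            = ((((2 ^ m - 2 ^ L.card) * 2 ^ (M.card + N.card)) / 2 : ℕ) : ℤ) := by
          linarith
        exact_mod_cast this
  · -- lower bound
    rintro w ⟨c, hc, hc0, rfl⟩
    obtain ⟨⟨α, β, γ⟩, rfl⟩ := LinearMap.mem_range.mp hc
    rcases wt_cases L M N hP α β γ hc0 with hcase | ⟨-, -, -, -, hcase⟩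
    · have : ((((2 ^ m - 2 ^ L.card) * 2 ^ (M.card + N.card)) / 2 : ℕ) : ℤ)
          = (wtv (codeMap (Δ L)ᶜ (Δ M) (Δ N) (α, β, γ)) : ℤ) := by linarith
      exact le_of_eq (by exact_mod_cast this)
    · have : ((((2 ^ m - 2 ^ L.card) * 2 ^ (M.card + N.card)) / 2 : ℕ) : ℤ)
          ≤ (wtv (codeMap (Δ L)ᶜ (Δ M) (Δ N) (α, β, γ)) : ℤ) := by
        rw [hexpand] at hw1z
        linarith
      exact_mod_cast this
  · -- weight enumerator
    have hw2ne0 : (2:ℕ) ^ (m + M.card + N.card - 1) ≠ 0 :=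
      (Nat.pow_pos (by norm_num)).ne'
    have hw1w2 : (((2 ^ m - 2 ^ L.card) * 2 ^ (M.card + N.card)) / 2 : ℕ)
        ≠ (2:ℕ) ^ (m + M.card + N.card - 1) := by
      intro heq
      have h1 : 2 * ((((2 ^ m - 2 ^ L.card) * 2 ^ (M.card + N.card)) / 2 : ℕ) : ℤ)
          < 2 * (((2:ℕ) ^ (m + M.card + N.card - 1) : ℕ) : ℤ) := by
        rw [hw1z, hw2z, hexpand]
        linarith
      rw [heq] at h1
      exact lt_irrefl _ h1
    have hf0 : (Finset.univ.filter
          (fun c => c ∈ LinearMap.range (codeMap (Δ L)ᶜ (Δ M) (Δ N)))).filter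
          (fun c => wtv c = 0) = {0} := by
      ext c
      simp only [Finset.mem_filter, Finset.mem_univ, true_and, Finset.mem_singleton]
      constructor
      · rintro ⟨-, h0⟩
        exact (wtv_eq_zero_iff c).mp h0
      · rintro rfl
        exact ⟨Submodule.zero_mem _, (wtv_eq_zero_iff _).mpr rfl⟩
    have hfilter_eq : ((Finset.univ.filter
          (fun c => c ∈ LinearMap.range (codeMap (Δ L)ᶜ (Δ M) (Δ N)))).filter
          (fun c => ¬ wtv c = 0)).filter
          (fun c => wtv c = 2 ^ (m + M.card + N.card - 1))
        = (Finset.univ.filter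
          (fun c => c ∈ LinearMap.range (codeMap (Δ L)ᶜ (Δ M) (Δ N)))).filter
          (fun c => wtv c = 2 ^ (m + M.card + N.card - 1)) := by
      ext c
      simp only [Finset.mem_filter, Finset.mem_univ, true_and]
      constructor
      · rintro ⟨⟨h1, -⟩, h3⟩
        exact ⟨h1, h3⟩
      · rintro ⟨h1, h3⟩
        exact ⟨⟨h1, by rw [h3]; exact hw2ne0⟩, h3⟩
    have hall1 : ∀ c ∈ ((Finset.univ.filter
          (fun c => c ∈ LinearMap.range (codeMap (Δ L)ᶜ (Δ M) (Δ N)))).filter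
          (fun c => ¬ wtv c = 0)).filter
          (fun c => ¬ wtv c = 2 ^ (m + M.card + N.card - 1)),
        wtv c = ((2 ^ m - 2 ^ L.card) * 2 ^ (M.card + N.card)) / 2 := by
      intro c hc
      simp only [Finset.mem_filter, Finset.mem_univ, true_and] at hc
      obtain ⟨⟨hcP, hc0⟩, hcw2⟩ := hc
      obtain ⟨⟨α, β, γ⟩, rfl⟩ := LinearMap.mem_range.mp hcP
      have hcne : codeMap (Δ L)ᶜ (Δ M) (Δ N) (α, β, γ) ≠ 0 := by
        intro h0
        exact hc0 (by rw [h0]; exact (wtv_eq_zero_iff _).mpr rfl)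
      rcases wt_cases L M N hP α β γ hcne with hcase | ⟨-, -, -, -, hcase⟩
      · have : (wtv (codeMap (Δ L)ᶜ (Δ M) (Δ N) (α, β, γ)) : ℤ)
            = ((((2 ^ m - 2 ^ L.card) * 2 ^ (M.card + N.card)) / 2 : ℕ) : ℤ) := by
          linarith
        exact_mod_cast this
      · exfalso
        apply hcw2
        have : (wtv (codeMap (Δ L)ᶜ (Δ M) (Δ N) (α, β, γ)) : ℤ)
            = (((2:ℕ) ^ (m + M.card + N.card - 1) : ℕ) : ℤ) := by
          linarith
        exact_mod_cast this
    -- cardinalities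
    have hcK := code_card L M N hP
    have hcK2 := w2_filter_card hm L M N hP
    have hc0card : ((Finset.univ.filter
          (fun c => c ∈ LinearMap.range (codeMap (Δ L)ᶜ (Δ M) (Δ N)))).filter
          (fun c => wtv c = 0)).card = 1 := by
      rw [hf0, Finset.card_singleton]
    have hA := Finset.card_filter_add_card_filter_not
      (s := Finset.univ.filter
        (fun c => c ∈ LinearMap.range (codeMap (Δ L)ᶜ (Δ M) (Δ N))))
      (p := fun c => wtv c = 0)
    have hB := Finset.card_filter_add_card_filter_not
      (s := (Finset.univ.filter
        (fun c => c ∈ LinearMap.range (codeMap (Δ L)ᶜ (Δ M) (Δ N)))).filter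
        (fun c => ¬ wtv c = 0))
      (p := fun c => wtv c = 2 ^ (m + M.card + N.card - 1))
    rw [hfilter_eq, hcK2] at hB
    rw [hc0card, hcK] at hA
    have hle1 : (1:ℕ) ≤ 2 ^ (m - L.card) := Nat.one_le_two_pow
    have hle2 : (2:ℕ) ^ (m - L.card) ≤ 2 ^ (m + M.card + N.card) :=
      Nat.pow_le_pow_right (by norm_num) (by omega)
    have hcK1 : (((Finset.univ.filter
          (fun c => c ∈ LinearMap.range (codeMap (Δ L)ᶜ (Δ M) (Δ N)))).filter
          (fun c => ¬ wtv c = 0)).filter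
          (fun c => ¬ wtv c = 2 ^ (m + M.card + N.card - 1))).card
        = 2 ^ (m + M.card + N.card) - 2 ^ (m - L.card) := by
      omega
    -- assemble the sums
    rw [← Finset.sum_filter_add_sum_filter_not
      (Finset.univ.filter (fun c => c ∈ LinearMap.range (codeMap (Δ L)ᶜ (Δ M) (Δ N))))
      (fun c => wtv c = 0) (fun c => (X : ℤ[X]) ^ wtv c)]
    rw [← Finset.sum_filter_add_sum_filter_not
      ((Finset.univ.filter
        (fun c => c ∈ LinearMap.range (codeMap (Δ L)ᶜ (Δ M) (Δ N)))).filter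
        (fun c => ¬ wtv c = 0))
      (fun c => wtv c = 2 ^ (m + M.card + N.card - 1)) (fun c => (X : ℤ[X]) ^ wtv c)]
    rw [hf0, Finset.sum_singleton, (wtv_eq_zero_iff _).mpr rfl, pow_zero]
    rw [hfilter_eq]
    rw [Finset.sum_congr rfl
      (fun c hc => by rw [(Finset.mem_filter.mp hc).2] :
        ∀ c ∈ (Finset.univ.filter
          (fun c => c ∈ LinearMap.range (codeMap (Δ L)ᶜ (Δ M) (Δ N)))).filter
          (fun c => wtv c = 2 ^ (m + M.card + N.card - 1)),
        (X : ℤ[X]) ^ wtv c = (X : ℤ[X]) ^ (2 ^ (m + M.card + N.card - 1)))]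
    rw [Finset.sum_congr rfl
      (fun c hc => by rw [hall1 c hc] :
        ∀ c ∈ ((Finset.univ.filter
          (fun c => c ∈ LinearMap.range (codeMap (Δ L)ᶜ (Δ M) (Δ N)))).filter
          (fun c => ¬ wtv c = 0)).filter
          (fun c => ¬ wtv c = 2 ^ (m + M.card + N.card - 1)),
        (X : ℤ[X]) ^ wtv c
          = (X : ℤ[X]) ^ (((2 ^ m - 2 ^ L.card) * 2 ^ (M.card + N.card)) / 2))]
    rw [Finset.sum_const, Finset.sum_const, hcK2, hcK1]
    rw [nsmul_eq_mul, nsmul_eq_mul]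
    have hcast1 : ((2 ^ (m + M.card + N.card) - 2 ^ (m - L.card) : ℕ) : ℤ[X])
        = Polynomial.C ((2 : ℤ) ^ (m + M.card + N.card) - 2 ^ (m - L.card)) := by
      rw [show ((2:ℤ) ^ (m + M.card + N.card) - 2 ^ (m - L.card))
          = ((2 ^ (m + M.card + N.card) - 2 ^ (m - L.card) : ℕ) : ℤ) by
        push_cast [Nat.cast_sub hle2]; ring]
      rw [Polynomial.C_eq_natCast]
    have hcast2 : ((2 ^ (m - L.card) - 1 : ℕ) : ℤ[X])
        = Polynomial.C ((2 : ℤ) ^ (m - L.card) - 1) := by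
      rw [show ((2:ℤ) ^ (m - L.card) - 1)
          = ((2 ^ (m - L.card) - 1 : ℕ) : ℤ) by
        push_cast [Nat.cast_sub hle1]; ring]
      rw [Polynomial.C_eq_natCast]
    rw [hcast1, hcast2]
    ring

  · -- Griesmer
    have hs : 1 ≤ m - L.card := by omega
    have hrange : m + M.card + N.card = (m - L.card) + (L.card + (M.card + N.card) - 1) + 1 := by
      omega
    have hval : (((2:ℚ) ^ m - 2 ^ L.card) * 2 ^ (M.card + N.card)) / 2
        = 2 ^ (L.card + (M.card + N.card) - 1) * (2 ^ (m - L.card) - 1) := by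
      have h1 : (2:ℚ) ^ m = 2 ^ L.card * 2 ^ (m - L.card) := by
        rw [← pow_add]
        congr 1
        omega
      have h2 : (2:ℚ) ^ L.card * 2 ^ (M.card + N.card)
          = 2 * 2 ^ (L.card + (M.card + N.card) - 1) := by
        rw [← pow_add, ← pow_succ']
        congr 1
        omega
      calc ((2:ℚ) ^ m - 2 ^ L.card) * 2 ^ (M.card + N.card) / 2
          = (2 ^ L.card * 2 ^ (M.card + N.card)) * (2 ^ (m - L.card) - 1) / 2 := by
            rw [h1]; ring
        _ = (2 * 2 ^ (L.card + (M.card + N.card) - 1)) * (2 ^ (m - L.card) - 1) / 2 := by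
            rw [h2]
        _ = 2 ^ (L.card + (M.card + N.card) - 1) * (2 ^ (m - L.card) - 1) := by ring
    have hvalz : ((2:ℤ) ^ m - 2 ^ L.card) * 2 ^ (M.card + N.card)
        = 2 ^ ((L.card + (M.card + N.card) - 1) + 1) * (2 ^ (m - L.card) - 1) := by
      have h1 : (2:ℤ) ^ m = 2 ^ L.card * 2 ^ (m - L.card) := by
        rw [← pow_add]
        congr 1
        omega
      have h2 : (2:ℤ) ^ L.card * 2 ^ (M.card + N.card)
          = 2 ^ ((L.card + (M.card + N.card) - 1) + 1) := by
        rw [← pow_add]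
        congr 1
        omega
      calc ((2:ℤ) ^ m - 2 ^ L.card) * 2 ^ (M.card + N.card)
          = (2 ^ L.card * 2 ^ (M.card + N.card)) * (2 ^ (m - L.card) - 1) := by
            rw [h1]; ring
        _ = 2 ^ ((L.card + (M.card + N.card) - 1) + 1) * (2 ^ (m - L.card) - 1) := by
            rw [h2]
    rw [hval, hvalz, hrange]
    exact griesmer_aux (m - L.card) (L.card + (M.card + N.card) - 1) hs
end
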